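/- Under consistency (Y = Y(A)), conditional exchangeability (Y(a) ⫫ A | X for each a), and positivity (P(A = a | X = x) > 0 for all x in the support of X), the counterfactual distribution is identified by the adjustment formula: P(Y(a) ≤ y) = E_X[ P(Y ≤ y | A = a, X) ]. -/

import Mathlib

open MeasureTheory ProbabilityTheory

/-- Adjustment formula. Under consistency (`Y = Y(A)` a.s.),
conditional exchangeability (`Y(a) ⫫ A | X`, formalized by independence under each
conditional measure `μ[|X = x]` for the discrete covariate `X`), and positivity
(`P(A = a, X = x) > 0` whenever `P(X = x) > 0`), the counterfactual distribution is
identified: `P(Y(a) ≤ y) = ∑_x P(X = x) · P(Y ≤ y | A = a, X = x)`. -/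
theorem stmt_2 {Ω : Type*} [MeasurableSpace Ω] (μ : Measure Ω) [IsProbabilityMeasure μ]
    (A : Ω → ℕ) (X : Ω → ℕ) (Y : Ω → ℝ) (Ycf : ℕ → Ω → ℝ)  -- Ycf a = counterfactual Y(a)
    (hA : Measurable A) (hX : Measurable X) (hY : Measurable Y)
    (hYcf : ∀ a, Measurable (Ycf a))
    (a : ℕ) (ha : a = 0 ∨ a = 1)  -- binary treatment
    -- consistency: Y = Y(a) a.s. on {A = a}
    (hcons : ∀ᵐ ω ∂μ, Y ω = Ycf (A ω) ω)
    -- conditional exchangeability: Y(a) ⫫ A given X = x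
    (hexch : ∀ x : ℕ, 0 < μ {ω | X ω = x} →
      IndepFun (Ycf a) A (μ[|{ω | X ω = x}]))
    -- positivity
    (hposit : ∀ x : ℕ, 0 < μ {ω | X ω = x} → 0 < μ {ω | A ω = a ∧ X ω = x})
    (y : ℝ) :
    μ {ω | Ycf a ω ≤ y} =
      ∑' x : ℕ, μ {ω | X ω = x} * μ[|{ω | A ω = a ∧ X ω = x}] {ω | Y ω ≤ y} := by
  classical
  set S : Set Ω := {ω | Ycf a ω ≤ y} with hS
  have hSmeas : MeasurableSet S := measurableSet_le (hYcf a) measurable_const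
  have hpart : μ S = ∑' x : ℕ, μ (S ∩ {ω | X ω = x}) := by
    have hU : S = ⋃ x : ℕ, S ∩ {ω | X ω = x} := by
      ext ω; simp [S]
    have hd : Pairwise (Function.onFun Disjoint fun x : ℕ => S ∩ {ω | X ω = x}) := by
      intro i j hij
      simp only [Function.onFun, Set.disjoint_left]
      rintro ω ⟨-, hi⟩ ⟨-, hj⟩
      exact hij (hi.symm.trans hj)
    have hm : ∀ i : ℕ, MeasurableSet (S ∩ {ω | X ω = i}) :=
      fun i => hSmeas.inter (hX (measurableSet_singleton i))
    have h := measure_iUnion (μ := μ) hd hm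
    rw [← hU] at h
    exact h
  rw [hpart]
  refine tsum_congr fun x => ?_
  set Mx : Set Ω := {ω | X ω = x} with hMx
  have hMxmeas : MeasurableSet Mx := hX (measurableSet_singleton x)
  by_cases hx : 0 < μ Mx
  · set T : Set Ω := {ω | A ω = a} with hT
    have hTmeas : MeasurableSet T := hA (measurableSet_singleton a)
    have hATset : {ω | A ω = a ∧ X ω = x} = T ∩ Mx := rfl
    have hq : 0 < μ (T ∩ Mx) := by rw [← hATset]; exact hposit x hx
    have hATmeas : MeasurableSet (T ∩ Mx) := hTmeas.inter hMxmeas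
    -- independence
    have hind := (hexch x hx).measure_inter_preimage_eq_mul (Set.Iic y) {a}
      measurableSet_Iic (measurableSet_singleton a)
    have hpre1 : Ycf a ⁻¹' Set.Iic y = S := rfl
    have hpre2 : A ⁻¹' {a} = T := rfl
    rw [hpre1, hpre2] at hind
    rw [cond_apply hMxmeas μ, cond_apply hMxmeas μ, cond_apply hMxmeas μ] at hind
    -- consistency: replace Y-event with Ycf-event
    have hcongr : μ ((T ∩ Mx) ∩ {ω | Y ω ≤ y}) = μ (Mx ∩ (S ∩ T)) := by
      apply measure_congr
      rw [Filter.eventuallyEq_set]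
      filter_upwards [hcons] with ω hω
      constructor
      · rintro ⟨⟨hTa, hMxa⟩, hY'⟩
        refine ⟨hMxa, ?_, hTa⟩
        simp only [S, Set.mem_setOf_eq]
        rw [← hTa, ← hω]; exact hY'
      · rintro ⟨hMxa, hS', hTa⟩
        refine ⟨⟨hTa, hMxa⟩, ?_⟩
        simp only [Set.mem_setOf_eq]
        rw [hω, hTa]
        exact hS'
    rw [hATset, cond_apply hATmeas μ, hcongr]
    -- now pure ENNReal arithmetic
    have hp0 : μ Mx ≠ 0 := hx.ne'
    have hpt : μ Mx ≠ ⊤ := (measure_lt_top μ _).ne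
    have hq0 : μ (T ∩ Mx) ≠ 0 := hq.ne'
    have hqt : μ (T ∩ Mx) ≠ ⊤ := (measure_lt_top μ _).ne
    have hTMx : Mx ∩ T = T ∩ Mx := Set.inter_comm _ _
    rw [hTMx] at hind
    -- hind : (μ Mx)⁻¹ * μ (Mx ∩ (S ∩ T)) = ((μ Mx)⁻¹ * μ (Mx ∩ S)) * ((μ Mx)⁻¹ * μ (T ∩ Mx))
    have key : μ (Mx ∩ (S ∩ T)) * μ Mx = μ (Mx ∩ S) * μ (T ∩ Mx) := by
      have := congrArg (fun z => μ Mx * μ Mx * z) hind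
      calc μ (Mx ∩ (S ∩ T)) * μ Mx
          = μ Mx * μ Mx * ((μ Mx)⁻¹ * μ (Mx ∩ (S ∩ T))) := by
            rw [mul_comm (μ Mx) (μ Mx), mul_assoc, ← mul_assoc (μ Mx) (μ Mx)⁻¹,
              ENNReal.mul_inv_cancel hp0 hpt, one_mul, mul_comm]
        _ = μ Mx * μ Mx * (((μ Mx)⁻¹ * μ (Mx ∩ S)) * ((μ Mx)⁻¹ * μ (T ∩ Mx))) := by rw [hind]
        _ = (μ Mx * (μ Mx)⁻¹) * μ (Mx ∩ S) * ((μ Mx * (μ Mx)⁻¹) * μ (T ∩ Mx)) := by ring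
        _ = μ (Mx ∩ S) * μ (T ∩ Mx) := by
            rw [ENNReal.mul_inv_cancel hp0 hpt, one_mul, one_mul]
    have hSMx : S ∩ Mx = Mx ∩ S := Set.inter_comm _ _
    rw [hSMx]
    calc μ (Mx ∩ S)
        = μ (Mx ∩ S) * (μ (T ∩ Mx) * (μ (T ∩ Mx))⁻¹) := by
          rw [ENNReal.mul_inv_cancel hq0 hqt, mul_one]
      _ = (μ (Mx ∩ S) * μ (T ∩ Mx)) * (μ (T ∩ Mx))⁻¹ := by ring
      _ = (μ (Mx ∩ (S ∩ T)) * μ Mx) * (μ (T ∩ Mx))⁻¹ := by rw [key]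
      _ = μ Mx * ((μ (T ∩ Mx))⁻¹ * μ (Mx ∩ (S ∩ T))) := by ring
  · -- μ Mx = 0 case
    have h0 : μ Mx = 0 := by simpa using (not_lt.mp hx).antisymm zero_le
    have : μ (S ∩ Mx) = 0 :=
      measure_mono_null Set.inter_subset_right h0
    rw [this, h0, zero_mul]
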